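/- Let α, δ ∈ ℝ, β > 0, j ∈ ℕ, and let λ ≥ 0 satisfy λ = 0 if α² + 3βδ > 0 and λ > 2√(−(α² + 3βδ))/(3β) if α² + 3βδ ≤ 0. Define γ₁(m) := (α − √(3β²m² + α² + 3βδ))/(3β) + i·m for m ∈ [λ, ∞), and let τ(m) := i·ω(γ₁(m)), which is a real-valued function of m on [λ, ∞). Then there exists a constant c > 0, depending only on α, β, δ, λ, j, such that |γ₁(m)|^{2j} · |τ′(m)| ≤ c · (1 + τ(m)²)^{(j+1)/3} for all m ∈ [λ, ∞), where τ′ denotes the derivative of τ. -/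

import Mathlib

set_option maxHeartbeats 4000000

private lemma sq_le_imp {x y : ℝ} (hx : 0 ≤ x) (hy : 0 ≤ y) (h : x^2 ≤ y^2) : x ≤ y := by
  nlinarith


/-- The dispersion symbol `ω(k) = -iβk³ + iαk² + iδk`. -/
noncomputable def omegaHNLS (α β δ : ℝ) (k : ℂ) : ℂ :=
  -Complex.I * (β : ℂ) * k ^ 3 + Complex.I * (α : ℂ) * k ^ 2 + Complex.I * (δ : ℂ) * k

/-- Parametrization of the left branch of `∂D⁺`:
`γ₁(m) = (α − √(3β²m² + α² + 3βδ))/(3β) + i m`. -/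
noncomputable def gammaOne (α β δ : ℝ) (m : ℝ) : ℂ :=
  (((α - Real.sqrt (3 * β ^ 2 * m ^ 2 + α ^ 2 + 3 * β * δ)) / (3 * β) : ℝ) : ℂ)
    + Complex.I * (m : ℂ)

/-- The (real-valued) map `τ(m) = i·ω(γ₁(m))`, realized as the real part of `i·ω(γ₁(m))`. -/
noncomputable def tauGammaOne (α β δ : ℝ) (m : ℝ) : ℝ :=
  (Complex.I * omegaHNLS α β δ (gammaOne α β δ m)).re

/-- Key pointwise bound: `|γ₁(m)|^{2j} |τ′(m)| ≤ c (1 + τ(m)²)^{(j+1)/3}` on `[λ, ∞)`. -/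
theorem gammaOne_tau_deriv_bound (α β δ : ℝ) (hβ : 0 < β) (j : ℕ) (lam : ℝ)
    (hlam0 : 0 ≤ lam)
    (hlam1 : 0 < α ^ 2 + 3 * β * δ → lam = 0)
    (hlam2 : α ^ 2 + 3 * β * δ ≤ 0 →
      2 * Real.sqrt (-(α ^ 2 + 3 * β * δ)) / (3 * β) < lam) :
    ∃ c > 0, ∀ m : ℝ, lam ≤ m →
      ‖gammaOne α β δ m‖ ^ (2 * j) * |deriv (tauGammaOne α β δ) m| ≤
        c * (1 + tauGammaOne α β δ m ^ 2) ^ (((j : ℝ) + 1) / 3) := by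
  have hβ' : (0:ℝ) < 3 * β := by linarith
  -- the explicit real formula for τ
  have tau_eq : ∀ m : ℝ, tauGammaOne α β δ m =
      β * ((α - Real.sqrt (3 * β ^ 2 * m ^ 2 + α ^ 2 + 3 * β * δ)) / (3 * β)) ^ 3
      - 3 * β * ((α - Real.sqrt (3 * β ^ 2 * m ^ 2 + α ^ 2 + 3 * β * δ)) / (3 * β)) * m ^ 2
      - α * ((α - Real.sqrt (3 * β ^ 2 * m ^ 2 + α ^ 2 + 3 * β * δ)) / (3 * β)) ^ 2
      + α * m ^ 2
      - δ * ((α - Real.sqrt (3 * β ^ 2 * m ^ 2 + α ^ 2 + 3 * β * δ)) / (3 * β)) := by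
    intro m
    simp only [tauGammaOne, omegaHNLS, gammaOne]
    set x := (α - Real.sqrt (3 * β ^ 2 * m ^ 2 + α ^ 2 + 3 * β * δ)) / (3 * β) with hx
    simp [Complex.ext_iff, pow_succ, Complex.mul_re, Complex.mul_im, Complex.add_re,
      Complex.add_im]
    ring
  -- uniform quadratic positivity facts
  have hSkey : ∀ m : ℝ, lam ≤ m → 0 < 3 * β ^ 2 * m ^ 2 + α ^ 2 + 3 * β * δ ∧
      3 * β ^ 2 * m ^ 2 ≤ 4 * (3 * β ^ 2 * m ^ 2 + α ^ 2 + 3 * β * δ) := by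
    intro m hm
    have hm0 : 0 ≤ m := le_trans hlam0 hm
    rcases le_or_gt (α ^ 2 + 3 * β * δ) 0 with hE0 | hE0
    · have h2 := hlam2 hE0
      set r := Real.sqrt (-(α ^ 2 + 3 * β * δ)) with hrdef
      have hr0 : 0 ≤ r := Real.sqrt_nonneg _
      have hr2 : r ^ 2 = -(α ^ 2 + 3 * β * δ) := Real.sq_sqrt (by linarith)
      have h3 : 2 * r < lam * (3 * β) := (div_lt_iff₀ hβ').1 h2
      have hlampos : 0 < lam := by nlinarith
      have h4 : 2 * r < m * (3 * β) := by nlinarith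
      have h5 : (2 * r) * (2 * r) < (m * (3 * β)) * (m * (3 * β)) :=
        mul_self_lt_mul_self (by linarith) h4
      constructor <;> nlinarith
    · constructor <;> nlinarith [sq_nonneg (β * m)]
  set e := Real.sqrt |α ^ 2 + 3 * β * δ| with hedef
  clear_value e
  have he0 : 0 ≤ e := by rw [hedef]; exact Real.sqrt_nonneg _
  have he2 : e ^ 2 = |α ^ 2 + 3 * β * δ| := by rw [hedef]; exact Real.sq_sqrt (abs_nonneg _)
  set K := (|α| + e) / (3 * β) with hKdef
  clear_value K
  have hK0 : 0 ≤ K := by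
    rw [hKdef]; exact div_nonneg (by linarith [abs_nonneg α]) (by linarith)
  have hK3 : K * (3 * β) = |α| + e := by rw [hKdef]; field_simp
  set R := 6 * β * (K + 1) ^ 2 + 6 * β + 4 * |α| * (K + 1) + 2 * |δ| + 6 * β * (K + 1)
      + 2 * |α| + 1 with hRdef
  clear_value R
  have hR0 : 0 < R := by
    rw [hRdef]
    nlinarith [mul_nonneg hβ.le (sq_nonneg (K + 1)), abs_nonneg α, abs_nonneg δ, hK0,
      mul_nonneg (abs_nonneg α) (by linarith [hK0] : (0:ℝ) ≤ K + 1),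
      mul_nonneg hβ.le (by linarith [hK0] : (0:ℝ) ≤ K + 1)]
  set M := lam + 8 * K + 8 + 15 * (2 * |α| + |δ| + 1) / (2 * β) with hMdef
  clear_value M
  have hMaux : 0 ≤ 15 * (2 * |α| + |δ| + 1) / (2 * β) :=
    div_nonneg (by positivity) (by linarith)
  set C3 := 3600 / β ^ 2 + (1 + M) ^ 6 with hC3def
  clear_value C3
  have hM0 : 0 ≤ M := by rw [hMdef]; linarith [hMaux, hK0]
  have hC30 : 0 < C3 := by
    rw [hC3def]
    have h1 : (0:ℝ) < 3600 / β ^ 2 := div_pos (by norm_num) (pow_pos hβ 2)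
    nlinarith [pow_nonneg (by linarith [hM0] : (0:ℝ) ≤ 1 + M) 6]
  refine ⟨(2 * (K + 1)) ^ (2 * j) * R * C3 ^ (((j : ℝ) + 1) / 3),
    mul_pos (mul_pos (pow_pos (by linarith) _) hR0)
      (Real.rpow_pos_of_pos hC30 _), ?_⟩
  intro m hm
  have hm0 : 0 ≤ m := le_trans hlam0 hm
  obtain ⟨hS1, hS2⟩ := hSkey m hm
  set s := Real.sqrt (3 * β ^ 2 * m ^ 2 + α ^ 2 + 3 * β * δ) with hsdef
  clear_value s
  have hs0 : 0 < s := by rw [hsdef]; exact Real.sqrt_pos.2 hS1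
  have hs2 : s ^ 2 = 3 * β ^ 2 * m ^ 2 + α ^ 2 + 3 * β * δ := by
    rw [hsdef]; exact Real.sq_sqrt hS1.le
  have hs3 : β * m ≤ 2 * s := by
    refine sq_le_imp (mul_nonneg hβ.le hm0) (by linarith) ?_
    nlinarith [hs2, hS2, sq_nonneg (β * m)]
  have hs4 : s ≤ 2 * β * m + e := by
    refine sq_le_imp hs0.le (by nlinarith [mul_nonneg hβ.le hm0]) ?_
    nlinarith [hs2, le_abs_self (α ^ 2 + 3 * β * δ), he2, mul_nonneg (mul_nonneg hβ.le hm0) he0]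
  have hs5 : 4 * β * m ≤ 5 * s := by
    refine sq_le_imp (by nlinarith [mul_nonneg hβ.le hm0]) (by linarith) ?_
    nlinarith [hs2, hS2, sq_nonneg (β * m)]
  set a := (α - s) / (3 * β) with hadef
  clear_value a
  have ha3 : a * (3 * β) = α - s := by rw [hadef]; field_simp
  have ha1 : |a| ≤ K + 2 / 3 * m := by
    rw [abs_le]
    constructor <;> nlinarith [le_abs_self α, neg_abs_le α]
  have ha2 : a ≤ K - 4 / 15 * m := by nlinarith [le_abs_self α]
  have haL : -(K + 2 / 3 * m) ≤ a := (abs_le.1 ha1).1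
  have haU : a ≤ K + 2 / 3 * m := (abs_le.1 ha1).2
  -- derivative of τ at m
  set w := -(β * m / s) with hwdef
  clear_value w
  have hw : |w| ≤ 2 := by
    rw [hwdef, abs_neg, abs_of_nonneg (by positivity), div_le_iff₀ hs0]
    linarith
  have hwL : -2 ≤ w := (abs_le.1 hw).1
  have hwU : w ≤ 2 := (abs_le.1 hw).2
  have hder : HasDerivAt (tauGammaOne α β δ)
      ((3 * β * a ^ 2 - 3 * β * m ^ 2 - 2 * α * a - δ) * w - 6 * β * a * m + 2 * α * m)
      m := by
    have key : ∀ {f g : ℝ → ℝ} {a b : ℝ}, f = g → a = b → HasDerivAt g b m → HasDerivAt f a m := by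
      rintro f g a b rfl rfl h; exact h
    have hpoly : HasDerivAt (fun t : ℝ => 3 * β ^ 2 * t ^ 2 + α ^ 2 + 3 * β * δ)
        (6 * β ^ 2 * m) m := by
      have h1 : HasDerivAt (fun t : ℝ => t ^ 2) (2 * m) m := by
        simpa using hasDerivAt_pow 2 m
      have h2 := (h1.const_mul (3 * β ^ 2)).add_const (α ^ 2 + 3 * β * δ)
      refine key ?_ ?_ h2
      · funext t; ring
      · ring
    have hsq := (Real.hasDerivAt_sqrt hS1.ne').comp m hpoly
    have hX : HasDerivAt
        (fun t : ℝ => (α - Real.sqrt (3 * β ^ 2 * t ^ 2 + α ^ 2 + 3 * β * δ)) / (3 * β))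
        w m := by
      have h := ((hasDerivAt_const m α).sub hsq).div_const (3 * β)
      refine key rfl ?_ h
      rw [hwdef, ← hsdef]
      field_simp
      ring
    have htot := ((((((hX.pow 3).const_mul β).sub
        ((hX.mul (hasDerivAt_pow 2 m)).const_mul (3 * β))).sub
        ((hX.pow 2).const_mul α)).add
        ((hasDerivAt_pow 2 m).const_mul α)).sub (hX.const_mul δ))
    have hfun : tauGammaOne α β δ = fun t : ℝ =>
        β * ((α - Real.sqrt (3 * β ^ 2 * t ^ 2 + α ^ 2 + 3 * β * δ)) / (3 * β)) ^ 3
        - 3 * β * ((α - Real.sqrt (3 * β ^ 2 * t ^ 2 + α ^ 2 + 3 * β * δ)) / (3 * β)) * t ^ 2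
        - α * ((α - Real.sqrt (3 * β ^ 2 * t ^ 2 + α ^ 2 + 3 * β * δ)) / (3 * β)) ^ 2
        + α * t ^ 2
        - δ * ((α - Real.sqrt (3 * β ^ 2 * t ^ 2 + α ^ 2 + 3 * β * δ)) / (3 * β)) :=
      funext tau_eq
    rw [hfun]
    refine key ?_ ?_ htot
    · funext t; simp only [Pi.sub_apply, Pi.add_apply, Pi.mul_apply, Pi.pow_apply]; ring
    · rw [← hsdef, ← hadef]
      push_cast
      ring
  have htau : tauGammaOne α β δ m = β * a ^ 3 - 3 * β * a * m ^ 2 - α * a ^ 2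
      + α * m ^ 2 - δ * a := by
    rw [tau_eq m, ← hsdef, ← hadef]
  -- bound on the derivative
  have hDb : |(3 * β * a ^ 2 - 3 * β * m ^ 2 - 2 * α * a - δ) * w - 6 * β * a * m
      + 2 * α * m| ≤ R * (1 + m) ^ 2 := by
    have hKm0 : (0:ℝ) ≤ K + 2 / 3 * m := by linarith
    have hsqa : a ^ 2 ≤ (K + 2 / 3 * m) ^ 2 := by clear * - haL haU; nlinarith
    have h3b : 3 * β * a ^ 2 ≤ 3 * β * (K + 2 / 3 * m) ^ 2 :=
      mul_le_mul_of_nonneg_left hsqa (by linarith)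
    have hαa : |α * a| ≤ |α| * (K + 2 / 3 * m) := by
      rw [abs_mul]; exact mul_le_mul_of_nonneg_left ha1 (abs_nonneg α)
    have hαa1 : α * a ≤ |α| * (K + 2 / 3 * m) := (le_abs_self _).trans hαa
    have hαa2 : -(|α| * (K + 2 / 3 * m)) ≤ α * a := by
      have := neg_abs_le (α * a); linarith
    have hN0 : (0:ℝ) ≤ 3 * β * (K + 2 / 3 * m) ^ 2 + 3 * β * m ^ 2
        + 2 * (|α| * (K + 2 / 3 * m)) + |δ| := by
      have := mul_nonneg hβ.le (sq_nonneg (K + 2 / 3 * m))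
      have := mul_nonneg hβ.le (sq_nonneg m)
      have := mul_nonneg (abs_nonneg α) hKm0
      have := abs_nonneg δ
      linarith
    have hA : |3 * β * a ^ 2 - 3 * β * m ^ 2 - 2 * α * a - δ| ≤
        3 * β * (K + 2 / 3 * m) ^ 2 + 3 * β * m ^ 2 + 2 * (|α| * (K + 2 / 3 * m)) + |δ| := by
      rw [abs_le]
      have h1 := le_abs_self δ
      have h2 := neg_abs_le δ
      have h3 := mul_nonneg hβ.le (sq_nonneg a)
      have h4 := mul_nonneg hβ.le (sq_nonneg m)
      have h5 := mul_nonneg hβ.le (sq_nonneg (K + 2 / 3 * m))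
      constructor <;> linarith [h3b, hαa1, hαa2, h1, h2, h3, h4, h5]
    have hAw : |(3 * β * a ^ 2 - 3 * β * m ^ 2 - 2 * α * a - δ) * w| ≤
        (3 * β * (K + 2 / 3 * m) ^ 2 + 3 * β * m ^ 2 + 2 * (|α| * (K + 2 / 3 * m)) + |δ|)
        * 2 := by
      rw [abs_mul]; exact mul_le_mul hA hw (abs_nonneg _) hN0
    have h6a : |6 * β * a * m| = 6 * β * |a| * m := by
      rw [abs_mul, abs_mul, abs_of_nonneg hm0, abs_of_nonneg (by linarith : (0:ℝ) ≤ 6 * β)]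
    have h2a : |2 * α * m| = 2 * |α| * m := by
      rw [abs_mul, abs_mul, abs_of_nonneg hm0]
      norm_num
    have tri : |(3 * β * a ^ 2 - 3 * β * m ^ 2 - 2 * α * a - δ) * w - 6 * β * a * m
        + 2 * α * m| ≤ |(3 * β * a ^ 2 - 3 * β * m ^ 2 - 2 * α * a - δ) * w|
        + |6 * β * a * m| + |2 * α * m| := by
      have e1 : (3 * β * a ^ 2 - 3 * β * m ^ 2 - 2 * α * a - δ) * w - 6 * β * a * m
          + 2 * α * m = ((3 * β * a ^ 2 - 3 * β * m ^ 2 - 2 * α * a - δ) * w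
          + -(6 * β * a * m)) + 2 * α * m := by ring
      rw [e1]
      have t1 := abs_add_le ((3 * β * a ^ 2 - 3 * β * m ^ 2 - 2 * α * a - δ) * w
        + -(6 * β * a * m)) (2 * α * m)
      have t2 := abs_add_le ((3 * β * a ^ 2 - 3 * β * m ^ 2 - 2 * α * a - δ) * w)
        (-(6 * β * a * m))
      rw [abs_neg] at t2
      linarith
    rw [h6a, h2a] at tri
    -- aggregate
    have hb1 : K + 2 / 3 * m ≤ (K + 1) * (1 + m) := by
      linarith [mul_nonneg hK0 hm0]
    have hb2 : (K + 2 / 3 * m) ^ 2 ≤ ((K + 1) * (1 + m)) ^ 2 := pow_le_pow_left₀ hKm0 hb1 2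
    have hm2 : m ^ 2 ≤ (1 + m) ^ 2 := by clear * - hm0; nlinarith
    have h1m1 : (1:ℝ) ≤ (1 + m) ^ 2 := by clear * - hm0; nlinarith
    have h1m2 : (1 + m) ≤ (1 + m) ^ 2 := by clear * - hm0; nlinarith
    have hKp : (0:ℝ) ≤ (K + 1) * (1 + m) := mul_nonneg (by linarith) (by linarith)
    have c1 : 3 * β * (K + 2 / 3 * m) ^ 2 ≤ 3 * β * ((K + 1) * (1 + m)) ^ 2 :=
      mul_le_mul_of_nonneg_left hb2 (by linarith)
    have c2 : 3 * β * m ^ 2 ≤ 3 * β * (1 + m) ^ 2 :=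
      mul_le_mul_of_nonneg_left hm2 (by linarith)
    have c3 : 2 * (|α| * (K + 2 / 3 * m)) ≤ 2 * (|α| * ((K + 1) * (1 + m))) := by
      have := mul_le_mul_of_nonneg_left hb1 (abs_nonneg α); linarith
    have c4 : |α| * ((K + 1) * (1 + m)) ≤ |α| * ((K + 1) * (1 + m) ^ 2) := by
      have h := mul_le_mul_of_nonneg_left h1m2 (mul_nonneg (abs_nonneg α) (by linarith : (0:ℝ) ≤ K + 1))
      clear * - h; nlinarith
    have c5 : |δ| ≤ |δ| * (1 + m) ^ 2 := by
      have := mul_le_mul_of_nonneg_left h1m1 (abs_nonneg δ); linarith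
    have c6 : 6 * β * ((K + 2 / 3 * m) * m) ≤ 6 * β * ((K + 1) * (1 + m) ^ 2) := by
      have h1 := mul_le_mul_of_nonneg_right hb1 hm0
      have h2 := mul_le_mul_of_nonneg_left (by linarith : m ≤ 1 + m) hKp
      have h3 : (K + 2 / 3 * m) * m ≤ (K + 1) * (1 + m) * (1 + m) := le_trans h1 h2
      clear * - h3 hβ; nlinarith [mul_le_mul_of_nonneg_left h3 (by linarith : (0:ℝ) ≤ 6 * β)]
    have hb3 : 6 * β * |a| * m ≤ 6 * β * ((K + 2 / 3 * m) * m) := by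
      have h := mul_le_mul_of_nonneg_left (mul_le_mul_of_nonneg_right ha1 hm0)
        (by linarith : (0:ℝ) ≤ 6 * β)
      clear * - h; nlinarith
    have c7 : 2 * |α| * m ≤ 2 * |α| * (1 + m) ^ 2 := by
      have h := mul_le_mul_of_nonneg_left (le_trans (by linarith : m ≤ 1 + m) h1m2) (abs_nonneg α)
      clear * - h; nlinarith
    rw [hRdef]
    clear * - tri hAw c1 c2 c3 c4 c5 c6 hb3 c7 h1m1
    linarith [tri, hAw, c1, c2, c3, c4, c5, c6, hb3, c7, h1m1]

  -- lower bound on (1+τ²)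
  have hC3m : (1 + m) ^ 6 ≤ C3 * (1 + tauGammaOne α β δ m ^ 2) := by
    have hτsq : (0:ℝ) ≤ tauGammaOne α β δ m ^ 2 := sq_nonneg _
    have h3600 : (0:ℝ) ≤ 3600 / β ^ 2 := div_nonneg (by norm_num) (sq_nonneg β)
    rcases le_or_gt m M with hmM | hmM
    · have h1 : (1 + m) ^ 6 ≤ (1 + M) ^ 6 := pow_le_pow_left₀ (by linarith) (by linarith) 6
      have h2 : (0:ℝ) ≤ (1 + M) ^ 6 := by positivity
      rw [hC3def]
      clear * - h1 h2 hτsq h3600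
      nlinarith [mul_nonneg h2 hτsq, mul_nonneg h3600 hτsq]
    · have hm8 : 8 * K + 8 ≤ m := by
        rw [hMdef] at hmM; clear * - hmM hMaux hlam0; linarith
      have hm1 : (1:ℝ) ≤ m := by clear * - hm8 hK0; linarith
      have hK8 : 8 * K ≤ m := by clear * - hm8; linarith
      have hmT : 15 * (2 * |α| + |δ| + 1) ≤ 2 * β * m := by
        rw [hMdef] at hmM
        clear * - hmM hK0 hlam0 hβ
        have h0 : 15 * (2 * |α| + |δ| + 1) / (2 * β) ≤ m := by linarith
        rw [div_le_iff₀ (by linarith : (0:ℝ) < 2 * β)] at h0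
        linarith
      have hna : (0:ℝ) ≤ -a := by clear * - ha2 hK8 hm1; linarith
      have hb1 : 2 / 15 * m ≤ -a := by clear * - ha2 hK8 hm1; linarith
      have hb2 : -a ≤ 4 / 5 * m := by clear * - haL hK8 hm1; linarith
      have hasq : a ^ 2 ≤ 16 / 25 * m ^ 2 := by clear * - hna hb2; nlinarith
      have h59 : (0:ℝ) ≤ 3 * m ^ 2 - 16 / 25 * m ^ 2 := by
        clear * - hm0; nlinarith [sq_nonneg m]
      have hQ : 2 / 15 * m * (3 * m ^ 2 - 16 / 25 * m ^ 2) ≤ (-a) * (3 * m ^ 2 - a ^ 2) :=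
        mul_le_mul hb1 (by linarith) h59 hna
      have hmm2 : m ≤ m ^ 2 := by clear * - hm1 hm0; nlinarith
      have hδa : δ * a ≤ |δ| * m := by
        have h : |δ * a| ≤ |δ| * m := by
          rw [abs_mul]
          apply mul_le_mul_of_nonneg_left _ (abs_nonneg δ)
          rw [abs_le]; clear * - hb1 hb2 hna hm1; constructor <;> linarith
        exact (le_abs_self _).trans h
      have hαm : -(2 * |α| * m ^ 2) ≤ α * m ^ 2 - α * a ^ 2 := by
        have h : |α * (m ^ 2 - a ^ 2)| ≤ |α| * (2 * m ^ 2) := by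
          rw [abs_mul]
          apply mul_le_mul_of_nonneg_left _ (abs_nonneg α)
          rw [abs_le]
          constructor <;> (clear * - hasq hm0; nlinarith [sq_nonneg a, sq_nonneg m])
        have h2 := neg_abs_le (α * (m ^ 2 - a ^ 2))
        clear * - h h2
        nlinarith
      have htlb : 2 / 15 * β * m ^ 3 ≤ tauGammaOne α β δ m := by
        rw [htau]
        have hQβ := mul_le_mul_of_nonneg_left hQ hβ.le
        have hT := mul_le_mul_of_nonneg_right hmT (sq_nonneg m)
        have hδ2 := mul_le_mul_of_nonneg_left hmm2 (abs_nonneg δ)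
        clear * - hQβ hT hδa hαm hδ2 hm1 hm0 hβ
        nlinarith [hδa, hαm, hQβ, hT, hδ2, mul_nonneg hβ.le (pow_nonneg hm0 3)]
      have hsq6 : (2 / 15 * β * m ^ 3) ^ 2 ≤ tauGammaOne α β δ m ^ 2 :=
        pow_le_pow_left₀ (mul_nonneg (mul_nonneg (by norm_num) hβ.le)
          (pow_nonneg hm0 3)) htlb 2
      have hkey : 3600 / β ^ 2 * ((2 / 15 * β * m ^ 3) ^ 2) = 64 * m ^ 6 := by
        field_simp
        ring
      have h64 : (1 + m) ^ 6 ≤ 64 * m ^ 6 := by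
        calc (1 + m) ^ 6 ≤ (2 * m) ^ 6 := pow_le_pow_left₀ (by linarith) (by linarith) 6
          _ = 64 * m ^ 6 := by ring
      have ha1' := mul_le_mul_of_nonneg_left hsq6 h3600
      have hM6 : (0:ℝ) ≤ (1 + M) ^ 6 * (1 + tauGammaOne α β δ m ^ 2) :=
        mul_nonneg (by positivity) (by linarith [hτsq])
      rw [hC3def]
      clear * - ha1' hkey h64 hM6 h3600 hτsq
      nlinarith [ha1', hkey, h64, hM6, h3600, hτsq]
  -- bound on γ₁
  have hgam : ‖gammaOne α β δ m‖ ≤ 2 * (K + 1) * (1 + m) := by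
    have h1 : ‖gammaOne α β δ m‖ ≤ |a| + |m| := by
      rw [gammaOne, ← hsdef, ← hadef]
      calc ‖(a : ℂ) + Complex.I * (m : ℂ)‖
          ≤ ‖(a : ℂ)‖ + ‖Complex.I * (m : ℂ)‖ :=
            norm_add_le _ _
        _ = |a| + |m| := by
            rw [norm_mul, Complex.norm_I, Complex.norm_real, Complex.norm_real, one_mul, Real.norm_eq_abs,
              Real.norm_eq_abs]
    rw [abs_of_nonneg hm0] at h1
    clear * - h1 ha1 hK0 hm0
    nlinarith [mul_nonneg hK0 hm0]
  -- assembly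
  rw [hder.deriv]
  have hτ2 : (0:ℝ) ≤ 1 + tauGammaOne α β δ m ^ 2 := by positivity
  have hexp : (0:ℝ) ≤ ((j : ℝ) + 1) / 3 := by positivity
  have step1 : ‖gammaOne α β δ m‖ ^ (2 * j) *
      |(3 * β * a ^ 2 - 3 * β * m ^ 2 - 2 * α * a - δ) * w - 6 * β * a * m + 2 * α * m| ≤
      (2 * (K + 1) * (1 + m)) ^ (2 * j) * (R * (1 + m) ^ 2) := by
    have h1 : ‖gammaOne α β δ m‖ ^ (2 * j) ≤ (2 * (K + 1) * (1 + m)) ^ (2 * j) :=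
      pow_le_pow_left₀ (norm_nonneg _) hgam _
    have h2 : (0 : ℝ) ≤ 2 * (K + 1) * (1 + m) :=
      mul_nonneg (by linarith) (by linarith)
    exact mul_le_mul h1 hDb (abs_nonneg _) (pow_nonneg h2 _)
  have step2 : (2 * (K + 1) * (1 + m)) ^ (2 * j) * (R * (1 + m) ^ 2) =
      (2 * (K + 1)) ^ (2 * j) * R * (1 + m) ^ (2 * j + 2) := by
    rw [mul_pow, pow_add]; ring
  have h1m : (0:ℝ) ≤ 1 + m := by linarith
  have hrp : ((1 + m) : ℝ) ^ (2 * j + 2) = (((1 + m) ^ 6 : ℝ)) ^ (((j : ℝ) + 1) / 3) := by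
    rw [← Real.rpow_natCast ((1 + m) : ℝ) (2 * j + 2),
      ← Real.rpow_natCast ((1 + m) : ℝ) 6, ← Real.rpow_mul h1m]
    congr 1
    push_cast
    ring
  have step3 : (((1 + m) ^ 6 : ℝ)) ^ (((j : ℝ) + 1) / 3) ≤
      (C3 * (1 + tauGammaOne α β δ m ^ 2)) ^ (((j : ℝ) + 1) / 3) :=
    Real.rpow_le_rpow (by positivity) hC3m hexp
  have step4 : (C3 * (1 + tauGammaOne α β δ m ^ 2)) ^ (((j : ℝ) + 1) / 3) =
      C3 ^ (((j : ℝ) + 1) / 3) * (1 + tauGammaOne α β δ m ^ 2) ^ (((j : ℝ) + 1) / 3) :=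
    Real.mul_rpow hC30.le hτ2
  calc ‖gammaOne α β δ m‖ ^ (2 * j) *
      |(3 * β * a ^ 2 - 3 * β * m ^ 2 - 2 * α * a - δ) * w - 6 * β * a * m + 2 * α * m|
      ≤ (2 * (K + 1)) ^ (2 * j) * R * (1 + m) ^ (2 * j + 2) := by
        rw [← step2]; exact step1
    _ = (2 * (K + 1)) ^ (2 * j) * R *
        ((((1 + m) ^ 6 : ℝ)) ^ (((j : ℝ) + 1) / 3)) := by rw [← hrp]
    _ ≤ (2 * (K + 1)) ^ (2 * j) * R *
        ((C3 * (1 + tauGammaOne α β δ m ^ 2)) ^ (((j : ℝ) + 1) / 3)) := by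
        exact mul_le_mul_of_nonneg_left step3
          (mul_nonneg (pow_nonneg (by linarith) _) hR0.le)
    _ = (2 * (K + 1)) ^ (2 * j) * R * C3 ^ (((j : ℝ) + 1) / 3) *
        (1 + tauGammaOne α β δ m ^ 2) ^ (((j : ℝ) + 1) / 3) := by
        rw [step4]; ring
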